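/- Let A be an orthogonal array OA(r, N, d, k) with MD(A) = k+1, and for each w = 1,…,t let B_w be a mixed orthogonal array of strength k with d rows and m_w columns of alphabet sizes d_{1w},…,d_{m_w w}, satisfying MD(B_w) ≥ 1. Then for all nonnegative integers n₁,…,n_t with 1 ≤ n₁+⋯+n_t ≤ N there exists an irredundant mixed orthogonal array IrMOA(r, N + Σ_{j=1}^{t}(m_j − 1)n_j, d^{N−(n₁+⋯+n_t)}d_{11}^{n₁}⋯d_{m₁1}^{n₁}⋯d_{1t}^{n_t}⋯d_{m_t t}^{n_t}, k). -/

import Mathlib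

open Finset

/-- The Hamming distance between two rows of an array: the number of columns
in which the rows differ. -/
def hamDist {ι κ : Type*} [Fintype κ] (A : ι → κ → ℕ) (i i' : ι) : ℕ :=
  (Finset.univ.filter fun j => A i j ≠ A i' j).card

/-- `MD(A)`: the minimum Hamming distance over all pairs of distinct rows. -/
noncomputable def minDist {ι κ : Type*} [Fintype κ] (A : ι → κ → ℕ) : ℕ :=
  sInf {n | ∃ i i', i ≠ i' ∧ hamDist A i i' = n}

/-- `A` is a mixed orthogonal array of strength `k` (rows indexed by `ι`,
columns by `κ`, column `j` taking values in `{0, …, lv j − 1}`): in the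
subarray given by any choice of at most `k` columns, every tuple of symbols
occurs equally often as a row, namely (number of rows)/(product of the levels
of the chosen columns) times. -/
def IsMOA {ι κ : Type*} [Fintype ι] [Fintype κ] [DecidableEq κ]
    (A : ι → κ → ℕ) (lv : κ → ℕ) (k : ℕ) : Prop :=
  (∀ i j, A i j < lv j) ∧
  ∀ S : Finset κ, S.card ≤ k → ∀ x : κ → ℕ, (∀ j ∈ S, x j < lv j) →
    (Finset.univ.filter fun i : ι => ∀ j ∈ S, A i j = x j).card * ∏ j ∈ S, lv j
      = Fintype.card ι

/-- An irredundant mixed orthogonal array of strength `k`: an MOA of strength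
`k` any two distinct rows of which have Hamming distance at least `k+1`. -/
def IsIrMOA {ι κ : Type*} [Fintype ι] [Fintype κ] [DecidableEq κ]
    (A : ι → κ → ℕ) (lv : κ → ℕ) (k : ℕ) : Prop :=
  IsMOA A lv k ∧ ∀ i i' : ι, i ≠ i' → k + 1 ≤ hamDist A i i'

/-- A difference scheme `D(r, c, d)`: an `r × c` matrix over `ℤ_d` such that
for any two distinct columns the `r` differences of corresponding entries
take each value of `ℤ_d` exactly `r/d` times. -/
def IsDiffScheme {r c d : ℕ} (B : Fin r → Fin c → ZMod d) : Prop :=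
  ∀ j j' : Fin c, j ≠ j' → ∀ g : ZMod d,
    (Finset.univ.filter fun i : Fin r => B i j - B i j' = g).card * d = r

/-- Let `A = OA(r, N, d, k)` with `MD(A) = k+1`, and for
`w = 1,…,t` let `B w` be an MOA of strength `k` with `d` rows, `m w` columns
and levels `Blv w`, with `MD(B w) ≥ 1`. Then for all `n₁,…,n_t ≥ 0` with
`1 ≤ n₁+⋯+n_t ≤ N` there is an irredundant MOA of strength `k` with `r` rows,
`N − (n₁+⋯+n_t)` columns of `d` levels and, for each `w` and each column `i`
of `B w`, exactly `n w` columns of `Blv w i` levels. -/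

theorem moa_count {ι κ : Type*} [Fintype ι] [Fintype κ] [DecidableEq κ]
    (A : ι → κ → ℕ) (lv : κ → ℕ) (k : ℕ) (h : IsMOA A lv k)
    (S : Finset κ) (hS : S.card ≤ k) (F : κ → Finset ℕ) :
    ((univ : Finset ι).filter fun i => ∀ j ∈ S, A i j ∈ F j).card * ∏ j ∈ S, lv j
      = Fintype.card ι * ∏ j ∈ S, ((F j).filter (· < lv j)).card := by
  classical
  set F' : κ → Finset ℕ := fun j => (F j).filter (· < lv j) with hF'
  have hmem : ∀ (i : ι) (j : κ), A i j ∈ F j ↔ A i j ∈ F' j := by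
    intro i j
    simp [hF', Finset.mem_filter, h.1 i j]
  have hfilt : ((univ : Finset ι).filter fun i => ∀ j ∈ S, A i j ∈ F j)
      = (univ.filter fun i => ∀ j ∈ S, A i j ∈ F' j) := by
    apply Finset.filter_congr; intro i _
    simp only [hmem]
  rw [hfilt]
  have key : ((univ : Finset ι).filter fun i => ∀ j ∈ S, A i j ∈ F' j).card
      = ∑ p ∈ S.pi (fun j => F' j),
          ((univ.filter fun i => ∀ j ∈ S, A i j ∈ F' j).filter
            fun i => (fun j hj => A i j) = p).card := by
    apply Finset.card_eq_sum_card_fiberwise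
    intro i hi
    simp only [Finset.coe_filter, Finset.mem_coe, Set.mem_setOf_eq, Finset.mem_filter, Finset.mem_univ, true_and] at hi ⊢
    rw [Finset.mem_pi]
    exact fun j hj => hi j hj
  rw [key, Finset.sum_mul]
  have fib : ∀ p ∈ S.pi (fun j => F' j),
      ((univ.filter fun i => ∀ j ∈ S, A i j ∈ F' j).filter
        fun i => (fun j hj => A i j) = p).card * ∏ j ∈ S, lv j = Fintype.card ι := by
    intro p hp
    rw [Finset.mem_pi] at hp
    set xp : κ → ℕ := fun j => if hj : j ∈ S then p j hj else 0 with hxp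
    have heq : ((univ.filter fun i => ∀ j ∈ S, A i j ∈ F' j).filter
        fun i => (fun j hj => A i j) = p)
        = (univ.filter fun i : ι => ∀ j ∈ S, A i j = xp j) := by
      ext i
      simp only [Finset.mem_filter, Finset.mem_univ, true_and]
      constructor
      · rintro ⟨-, h2⟩ j hj
        have := congrFun (congrFun h2 j) hj
        simp [hxp, hj, this]
      · intro hi
        constructor
        · intro j hj
          rw [hi j hj]
          have : xp j = p j hj := by simp [hxp, hj]
          rw [this]; exact hp j hj
        · funext j hj
          have := hi j hj
          simpa [hxp, hj] using this
    rw [heq]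
    apply h.2 S hS xp
    intro j hj
    have : xp j = p j hj := by simp [hxp, hj]
    rw [this]
    have := hp j hj
    simp [hF', Finset.mem_filter] at this
    exact this.2
  rw [Finset.sum_congr rfl fib, Finset.sum_const, Finset.card_pi, smul_eq_mul, mul_comm]

set_option maxHeartbeats 2000000 in
theorem statement12 {r N d k t : ℕ}
    (A : Fin r → Fin N → ℕ) (hA : IsMOA A (fun _ => d) k)
    (hMDA : minDist A = k + 1)
    (m : Fin t → ℕ)
    (B : (w : Fin t) → ℕ → Fin (m w) → ℕ)
    (Blv : (w : Fin t) → Fin (m w) → ℕ)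
    (hB : ∀ w, IsMOA (fun a : Fin d => B w a.val) (Blv w) k)
    (hBMD : ∀ w, 1 ≤ minDist (fun a : Fin d => B w a.val))
    (n : Fin t → ℕ) (hn1 : 1 ≤ ∑ w, n w) (hnN : ∑ w, n w ≤ N) :
    ∃ C : Fin r → (Fin (N - ∑ w, n w) ⊕ (Σ w : Fin t, Fin (n w) × Fin (m w))) → ℕ,
      IsIrMOA C (Sum.elim (fun _ => d) fun p => Blv p.1 p.2.2) k := by
  classical
  obtain ⟨i0, i1, hi01⟩ : ∃ i i' : Fin r, i ≠ i' := by
    by_contra hc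
    push_neg at hc
    have hempty : {nn | ∃ i i' : Fin r, i ≠ i' ∧ hamDist A i i' = nn} = ∅ := by
      ext nn
      simp only [Set.mem_setOf_eq, Set.mem_empty_iff_false, iff_false, not_exists]
      rintro i i' ⟨hne, -⟩
      exact hne (hc i i')
    rw [minDist, hempty, Nat.sInf_empty] at hMDA
    omega
  have hdistA : ∀ i i' : Fin r, i ≠ i' → k + 1 ≤ hamDist A i i' := fun i i' hne => by
    rw [← hMDA]
    exact Nat.sInf_le ⟨i, i', hne, rfl⟩
  have hN : 1 ≤ N := le_trans hn1 hnN
  have hd : 0 < d := lt_of_le_of_lt (Nat.zero_le _) (hA.1 i0 ⟨0, hN⟩)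
  obtain ⟨e⟩ : Nonempty ((Fin (N - ∑ w, n w) ⊕ (Σ w : Fin t, Fin (n w))) ≃ Fin N) := by
    refine ⟨Fintype.equivOfCardEq ?_⟩
    simp only [Fintype.card_sum, Fintype.card_fin, Fintype.card_sigma]
    omega
  refine ⟨fun i => Sum.elim (fun j₀ => A i (e (Sum.inl j₀)))
      (fun z => B z.1 (A i (e (Sum.inr ⟨z.1, z.2.1⟩))) z.2.2), ?_, ?_⟩
  · constructor
    · rintro i (j₀ | ⟨w, p, q⟩)
      · exact hA.1 i _
      · exact (hB w).1 ⟨A i (e (Sum.inr ⟨w, p⟩)), hA.1 i _⟩ q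
    · intro S hSk x hx
      suffices hsuff : (Finset.univ.filter fun i : Fin r => ∀ j ∈ S,
          (Sum.elim (fun j₀ => A i (e (Sum.inl j₀)))
            (fun z : Σ w : Fin t, Fin (n w) × Fin (m w) =>
              B z.1 (A i (e (Sum.inr ⟨z.1, z.2.1⟩))) z.2.2)) j = x j).card
          * ∏ j ∈ S, Sum.elim (fun _ => d) (fun p => Blv p.1 p.2.2) j
        = Fintype.card (Fin r) by
        convert hsuff using 3
        ext i
        simp only [Finset.mem_filter, Finset.mem_univ, true_and]
      set S₀ : Finset (Fin (N - ∑ w, n w)) := univ.filter (fun j₀ => Sum.inl j₀ ∈ S) with hS₀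
      set T : (σ : Σ w : Fin t, Fin (n w)) → Finset (Fin (m σ.1)) :=
        fun σ => univ.filter fun q => Sum.inr ⟨σ.1, (σ.2, q)⟩ ∈ S with hT
      set P : Finset (Σ w : Fin t, Fin (n w)) := univ.filter fun σ => (T σ).Nonempty with hP
      set G : (σ : Σ w : Fin t, Fin (n w)) → Finset ℕ :=
        fun σ => (Finset.range d).filter fun a => ∀ q ∈ T σ,
          B σ.1 a q = x (Sum.inr ⟨σ.1, (σ.2, q)⟩) with hG
      set F : Fin N → Finset ℕ :=
        fun j => Sum.elim (fun j₀ => {x (Sum.inl j₀)}) (fun σ => G σ) (e.symm j) with hF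
      set SA : Finset (Fin N) :=
        S₀.image (fun j₀ => e (Sum.inl j₀)) ∪ P.image (fun σ => e (Sum.inr σ)) with hSA
      -- injectivity facts
      have hinj2 : Function.Injective
          (fun z : Σ σ : (Σ w : Fin t, Fin (n w)), Fin (m σ.1) =>
            (Sum.inr ⟨z.1.1, (z.1.2, z.2)⟩ :
              Fin (N - ∑ w, n w) ⊕ (Σ w : Fin t, Fin (n w) × Fin (m w)))) := by
        rintro ⟨⟨w, p⟩, q⟩ ⟨⟨w', p'⟩, q'⟩ h
        have h' := Sum.inr_injective h
        rw [Sigma.mk.inj_iff] at h'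
        obtain ⟨rfl, h2⟩ := h'
        rw [heq_iff_eq, Prod.mk.injEq] at h2
        obtain ⟨rfl, rfl⟩ := h2
        rfl
      have hinjl : Function.Injective (fun j₀ : Fin (N - ∑ w, n w) => e (Sum.inl j₀)) :=
        fun a b h => Sum.inl_injective (e.injective h)
      have hinjr : Function.Injective (fun σ : Σ w : Fin t, Fin (n w) => e (Sum.inr σ)) :=
        fun a b h => Sum.inr_injective (e.injective h)
      -- membership fact for the sigma part
      have hsigmem : ∀ z ∈ P.sigma T, Sum.inr ⟨z.1.1, (z.1.2, z.2)⟩ ∈ S := by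
        rintro ⟨σ, q⟩ hz
        rw [Finset.mem_sigma] at hz
        have := hz.2
        rw [hT] at this
        simpa using this
      -- decomposition of S
      have f1 : S = S₀.image Sum.inl ∪
          (P.sigma T).image (fun z => Sum.inr ⟨z.1.1, (z.1.2, z.2)⟩) := by
        ext j
        rcases j with j₀ | ⟨w, p, q⟩
        · simp only [Finset.mem_union, Finset.mem_image]
          constructor
          · intro hj
            exact Or.inl ⟨j₀, by rw [hS₀]; simpa using hj, rfl⟩
          · rintro (⟨a, ha, haeq⟩ | ⟨z, -, hcon⟩)
            · rw [hS₀] at ha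
              simp only [Finset.mem_filter, Finset.mem_univ, true_and] at ha
              rw [← haeq]; exact ha
            · exact absurd hcon (by simp)
        · simp only [Finset.mem_union, Finset.mem_image]
          constructor
          · intro hj
            refine Or.inr ⟨⟨⟨w, p⟩, q⟩, ?_, rfl⟩
            rw [Finset.mem_sigma]
            have hqT : q ∈ T ⟨w, p⟩ := by rw [hT]; simpa using hj
            refine ⟨?_, hqT⟩
            rw [hP]
            simp only [Finset.mem_filter, Finset.mem_univ, true_and]
            exact ⟨q, hqT⟩
          · intro hj
            rcases hj with ⟨a, -, hcon⟩ | ⟨z, hz, hzeq⟩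
            · exact absurd hcon (by simp)
            · have := hsigmem z hz
              rwa [hzeq] at this
      have hdisj1 : Disjoint (S₀.image (Sum.inl :
            Fin (N - ∑ w, n w) → Fin (N - ∑ w, n w) ⊕ (Σ w : Fin t, Fin (n w) × Fin (m w))))
          ((P.sigma T).image (fun z : Σ σ : (Σ w : Fin t, Fin (n w)), Fin (m σ.1) =>
            (Sum.inr ⟨z.1.1, (z.1.2, z.2)⟩ :
              Fin (N - ∑ w, n w) ⊕ (Σ w : Fin t, Fin (n w) × Fin (m w))))) := by
        simp only [Finset.disjoint_left, Finset.mem_image]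
        rintro a ⟨j₀, -, rfl⟩ ⟨z, -, hcon⟩
        exact absurd hcon (by simp)
      -- card of S
      have f2 : S.card = S₀.card + ∑ σ ∈ P, (T σ).card := by
        rw [f1, Finset.card_union_of_disjoint hdisj1,
          Finset.card_image_of_injective _ Sum.inl_injective,
          Finset.card_image_of_injective _ hinj2, Finset.card_sigma]
      have hPmem : ∀ σ ∈ P, (T σ).Nonempty := by
        intro σ hσ; rw [hP] at hσ; simpa using hσ
      have f3 : S₀.card + P.card ≤ S.card := by
        rw [f2]
        have hPc : P.card = ∑ σ ∈ P, 1 := by simp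
        rw [hPc]
        exact Nat.add_le_add_left (Finset.sum_le_sum fun σ hσ =>
          Finset.card_pos.mpr (hPmem σ hσ)) _
      have hdisjSA : Disjoint (S₀.image (fun j₀ => e (Sum.inl j₀)))
          (P.image (fun σ => e (Sum.inr σ))) := by
        simp only [Finset.disjoint_left, Finset.mem_image]
        rintro a ⟨j₀, -, rfl⟩ ⟨σ, -, hcon⟩
        exact absurd (e.injective hcon) (by simp)
      have hSAcard : SA.card = S₀.card + P.card := by
        rw [hSA, Finset.card_union_of_disjoint hdisjSA,
          Finset.card_image_of_injective _ hinjl, Finset.card_image_of_injective _ hinjr]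
      have hSAk : SA.card ≤ k := by rw [hSAcard]; exact le_trans f3 hSk
      -- product of levels over S
      have f4 : ∏ j ∈ S, Sum.elim (fun _ => d) (fun p : Σ w : Fin t, Fin (n w) × Fin (m w) =>
          Blv p.1 p.2.2) j = d ^ S₀.card * ∏ σ ∈ P, ∏ q ∈ T σ, Blv σ.1 q := by
        rw [f1, Finset.prod_union hdisj1,
          Finset.prod_image (fun a _ b _ h => Sum.inl_injective h),
          Finset.prod_image (fun a _ b _ h => hinj2 h)]
        simp only [Sum.elim_inl, Sum.elim_inr, Finset.prod_const]
        rw [Finset.prod_sigma]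
      -- per-σ counting from B
      have f5 : ∀ σ ∈ P, (G σ).card * ∏ q ∈ T σ, Blv σ.1 q = d := by
        rintro ⟨w, p⟩ -
        have hTinj : Function.Injective (fun q : Fin (m w) =>
            (Sum.inr ⟨w, (p, q)⟩ :
              Fin (N - ∑ w, n w) ⊕ (Σ w : Fin t, Fin (n w) × Fin (m w)))) := by
          intro q q' h
          have h' := Sum.inr_injective h
          rw [Sigma.mk.inj_iff] at h'
          obtain ⟨-, h2⟩ := h'
          rw [heq_iff_eq, Prod.mk.injEq] at h2
          exact h2.2
        have hTk : (T ⟨w, p⟩).card ≤ k := by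
          refine le_trans ?_ hSk
          apply Finset.card_le_card_of_injOn (fun q => Sum.inr ⟨w, (p, q)⟩)
          · intro q hq
            rw [hT] at hq
            simpa using hq
          · exact fun a _ b _ h => hTinj h
        have hx' : ∀ q ∈ T ⟨w, p⟩, x (Sum.inr ⟨w, (p, q)⟩) < Blv w q := by
          intro q hq
          have hmem : Sum.inr ⟨w, (p, q)⟩ ∈ S := by rw [hT] at hq; simpa using hq
          exact hx _ hmem
        have hcount := (hB w).2 (T ⟨w, p⟩) hTk (fun q => x (Sum.inr ⟨w, (p, q)⟩)) hx'
        rw [Fintype.card_fin] at hcount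
        have hGimg : G ⟨w, p⟩ = (univ.filter fun a : Fin d => ∀ q ∈ T ⟨w, p⟩,
            B w a.val q = x (Sum.inr ⟨w, (p, q)⟩)).image Fin.val := by
          ext a
          simp only [hG, Finset.mem_filter, Finset.mem_range, Finset.mem_image,
            Finset.mem_univ, true_and]
          constructor
          · rintro ⟨h1, h2⟩
            exact ⟨⟨a, h1⟩, h2, rfl⟩
          · rintro ⟨b, hb, rfl⟩
            exact ⟨b.isLt, hb⟩
        rw [hGimg, Finset.card_image_of_injective _ Fin.val_injective]
        convert hcount using 3
        ext a
        simp only [Finset.mem_filter, Finset.mem_univ, true_and]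
      -- the main filter identity
      have f6 : ∀ i : Fin r, (∀ j ∈ SA, A i j ∈ F j) ↔ (∀ j ∈ S,
            (Sum.elim (fun j₀ => A i (e (Sum.inl j₀)))
              (fun z : Σ w : Fin t, Fin (n w) × Fin (m w) =>
                B z.1 (A i (e (Sum.inr ⟨z.1, z.2.1⟩))) z.2.2)) j = x j) := by
        intro i
        constructor
        · intro h j hjS
          rcases j with j₀ | ⟨w, p, q⟩
          · have hj₀ : j₀ ∈ S₀ := by rw [hS₀]; simpa using hjS
            have hmem : e (Sum.inl j₀) ∈ SA := by
              rw [hSA]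
              exact Finset.mem_union_left _ (Finset.mem_image_of_mem _ hj₀)
            have := h _ hmem
            rw [hF] at this
            simp only [Equiv.symm_apply_apply, Sum.elim_inl, Finset.mem_singleton] at this
            simpa using this
          · have hqT : q ∈ T ⟨w, p⟩ := by rw [hT]; simpa using hjS
            have hσP : (⟨w, p⟩ : Σ w : Fin t, Fin (n w)) ∈ P := by
              rw [hP]
              simp only [Finset.mem_filter, Finset.mem_univ, true_and]
              exact ⟨q, hqT⟩
            have hmem : e (Sum.inr ⟨w, p⟩) ∈ SA := by
              rw [hSA]
              exact Finset.mem_union_right _ (Finset.mem_image_of_mem _ hσP)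
            have := h _ hmem
            rw [hF] at this
            simp only [Equiv.symm_apply_apply, Sum.elim_inr, hG, Finset.mem_filter,
              Finset.mem_range] at this
            exact this.2 q hqT
        · intro h j hjSA
          rw [hSA, Finset.mem_union, Finset.mem_image, Finset.mem_image] at hjSA
          rcases hjSA with ⟨j₀, hj₀, rfl⟩ | ⟨σ, hσ, rfl⟩
          · rw [hF]
            simp only [Equiv.symm_apply_apply, Sum.elim_inl, Finset.mem_singleton]
            have hjS : Sum.inl j₀ ∈ S := by rw [hS₀] at hj₀; simpa using hj₀
            have := h _ hjS
            simpa using this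
          · rw [hF]
            simp only [Equiv.symm_apply_apply, Sum.elim_inr, hG, Finset.mem_filter,
              Finset.mem_range]
            refine ⟨hA.1 i _, ?_⟩
            intro q hq
            have hjS : Sum.inr ⟨σ.1, (σ.2, q)⟩ ∈ S := by rw [hT] at hq; simpa using hq
            have := h _ hjS
            simpa using this
      -- apply the counting lemma for A
      have key := moa_count A (fun _ => d) k hA SA hSAk F
      rw [Fintype.card_fin] at key
      have key' : (Finset.univ.filter fun i : Fin r => ∀ j ∈ S,
            (Sum.elim (fun j₀ => A i (e (Sum.inl j₀)))
              (fun z : Σ w : Fin t, Fin (n w) × Fin (m w) =>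
                B z.1 (A i (e (Sum.inr ⟨z.1, z.2.1⟩))) z.2.2)) j = x j).card
            * ∏ j ∈ SA, d = r * ∏ j ∈ SA, ((F j).filter (· < d)).card := by
        convert key using 3
        ext i
        simp only [Finset.mem_filter, Finset.mem_univ, true_and]
        exact (f6 i).symm
      clear key
      rename' key' => key
      -- evaluate the RHS product
      have hxinl : ∀ j₀ ∈ S₀, x (Sum.inl j₀) < d := by
        intro j₀ hj₀
        have hjS : Sum.inl j₀ ∈ S := by rw [hS₀] at hj₀; simpa using hj₀
        exact hx _ hjS
      have hprodF : ∏ j ∈ SA, ((F j).filter (· < d)).card = ∏ σ ∈ P, (G σ).card := by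
        rw [hSA, Finset.prod_union hdisjSA,
          Finset.prod_image (fun a _ b _ h => hinjl h),
          Finset.prod_image (fun a _ b _ h => hinjr h)]
        have h1 : ∏ j₀ ∈ S₀, (((F (e (Sum.inl j₀))).filter (· < d))).card = 1 := by
          apply Finset.prod_eq_one
          intro j₀ hj₀
          rw [hF]
          simp only [Equiv.symm_apply_apply, Sum.elim_inl]
          rw [Finset.filter_singleton, if_pos (hxinl j₀ hj₀)]
          simp
        have h2 : ∀ σ ∈ P, (((F (e (Sum.inr σ))).filter (· < d))).card = (G σ).card := by
          intro σ hσ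
          rw [hF]
          simp only [Equiv.symm_apply_apply, Sum.elim_inr]
          congr 1
          apply Finset.filter_true_of_mem
          intro a ha
          rw [hG] at ha
          simp only [Finset.mem_filter, Finset.mem_range] at ha
          exact ha.1
        rw [h1, one_mul]
        exact Finset.prod_congr rfl h2
      rw [hprodF, Finset.prod_const, hSAcard] at key
      -- final arithmetic
      rw [f4, Fintype.card_fin]
      set c := (Finset.univ.filter fun i : Fin r => ∀ j ∈ S,
            (Sum.elim (fun j₀ => A i (e (Sum.inl j₀)))
              (fun z : Σ w : Fin t, Fin (n w) × Fin (m w) =>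
                B z.1 (A i (e (Sum.inr ⟨z.1, z.2.1⟩))) z.2.2)) j = x j).card with hc
      set Gp := ∏ σ ∈ P, (G σ).card with hGp
      set Pp := ∏ σ ∈ P, ∏ q ∈ T σ, Blv σ.1 q with hPp
      have hGP : Gp * Pp = d ^ P.card := by
        rw [hGp, hPp, ← Finset.prod_mul_distrib, Finset.prod_congr rfl f5, Finset.prod_const]
      have hGpos : 0 < Gp := by
        rw [hGp]
        apply Finset.prod_pos
        intro σ hσ
        rcases Nat.eq_zero_or_pos (G σ).card with h0 | h
        · exfalso
          have := f5 σ hσ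
          rw [h0, zero_mul] at this
          omega
        · exact h
      apply Nat.eq_of_mul_eq_mul_right hGpos
      calc c * (d ^ S₀.card * Pp) * Gp
          = c * d ^ S₀.card * (Gp * Pp) := by ring
        _ = c * d ^ S₀.card * d ^ P.card := by rw [hGP]
        _ = c * d ^ (S₀.card + P.card) := by rw [pow_add, mul_assoc]
        _ = r * Gp := key
  · intro i i' hne
    have hdA := hdistA i i' hne
    refine le_trans hdA ?_
    unfold hamDist
    set g : (Fin (N - ∑ w, n w) ⊕ (Σ w : Fin t, Fin (n w) × Fin (m w))) → Fin N :=
      Sum.elim (fun j₀ => e (Sum.inl j₀)) (fun z => e (Sum.inr ⟨z.1, z.2.1⟩)) with hg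
    apply Finset.card_le_card_of_surjOn g
    intro jA hjA
    simp only [Finset.coe_filter, Set.mem_setOf_eq, Finset.mem_univ, true_and] at hjA ⊢
    rcases hsymm : e.symm jA with j₀ | σ
    · refine ⟨Sum.inl j₀, ?_, ?_⟩
      · have : e (Sum.inl j₀) = jA := by rw [← hsymm, Equiv.apply_symm_apply]
        simpa [this] using hjA
      · simp only [hg, Sum.elim_inl, ← hsymm, Equiv.apply_symm_apply]
    · have hc : e (Sum.inr σ) = jA := by rw [← hsymm, Equiv.apply_symm_apply]
      set a : Fin d := ⟨A i (e (Sum.inr σ)), hA.1 i _⟩ with ha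
      set a' : Fin d := ⟨A i' (e (Sum.inr σ)), hA.1 i' _⟩ with ha'
      have haa' : a ≠ a' := by
        intro hcon
        apply hjA
        rw [← hc]
        exact congrArg Fin.val hcon
      have h1 : 1 ≤ hamDist (fun b : Fin d => B σ.1 b.val) a a' :=
        le_trans (hBMD σ.1) (Nat.sInf_le ⟨a, a', haa', rfl⟩)
      have : (Finset.univ.filter fun q : Fin (m σ.1) =>
          B σ.1 a.val q ≠ B σ.1 a'.val q).Nonempty := by
        rw [← Finset.card_pos]
        exact h1
      obtain ⟨q, hq⟩ := this
      simp only [Finset.mem_filter, Finset.mem_univ, true_and] at hq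
      refine ⟨Sum.inr ⟨σ.1, (σ.2, q)⟩, ?_, ?_⟩
      · simpa using hq
      · simp only [hg, Sum.elim_inr]
        exact hc
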